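/- Let P*, P_0, V_0, Q_0 be positive reals, α_p ≠ 0, α_q, Q* reals, with Δ = P*² − (P*/P_0)^{2/α_p}·Q*² + Q_0²·(P*/P_0)^{2α_q/α_p} ≥ 0. Set D = P*² + Q_0²·(P*/P_0)^{2α_q/α_p}, V*_{es,q} = V_0·[(P*/P_0)^{2/α_p}·P*·Q* − Q_0·(P*/P_0)^{(α_q+1)/α_p}·√Δ]/D, V*_{es,d} = V_0 − V_0·[Q_0·(P*/P_0)^{(α_q+2)/α_p}·Q* + (P*/P_0)^{1/α_p}·P*·√Δ]/D. Define the resulting noncritical load voltage components V_{nl,d} = V_0 − V*_{es,d} and V_{nl,q} = −V*_{es,q}. Then V_{nl,d}² + V_{nl,q}² = V_0²·(P*/P_0)^{2/α_p}. -/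

import Mathlib

theorem es_setpoints_load_voltage_magnitude
    (Pstar P0 V0 Q0 : ℝ) (hPstar : 0 < Pstar) (hP0 : 0 < P0) (hV0 : 0 < V0) (hQ0 : 0 < Q0)
    (αp αq Qstar : ℝ) (hαp : αp ≠ 0)
    (Δ : ℝ)
    (hΔ : Δ = Pstar ^ 2 - (Pstar / P0) ^ (2 / αp) * Qstar ^ 2
            + Q0 ^ 2 * (Pstar / P0) ^ (2 * αq / αp))
    (hΔnn : Δ ≥ 0)
    (D Vesq Vesd Vnld Vnlq : ℝ)
    (hD : D = Pstar ^ 2 + Q0 ^ 2 * (Pstar / P0) ^ (2 * αq / αp))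
    (hVesq : Vesq = V0 * ((Pstar / P0) ^ (2 / αp) * Pstar * Qstar
              - Q0 * (Pstar / P0) ^ ((αq + 1) / αp) * Real.sqrt Δ) / D)
    (hVesd : Vesd = V0 - V0 * (Q0 * (Pstar / P0) ^ ((αq + 2) / αp) * Qstar
              + (Pstar / P0) ^ (1 / αp) * Pstar * Real.sqrt Δ) / D)
    (hVnld : Vnld = V0 - Vesd)
    (hVnlq : Vnlq = -Vesq) :
    Vnld ^ 2 + Vnlq ^ 2 = V0 ^ 2 * (Pstar / P0) ^ (2 / αp) := by
  have hx : 0 < Pstar / P0 := div_pos hPstar hP0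
  set a := (Pstar / P0) ^ (1 / αp) with ha
  set b := (Pstar / P0) ^ (αq / αp) with hb
  have h2 : (Pstar / P0) ^ (2 / αp) = a * a := by
    rw [ha, ← Real.rpow_add hx]; congr 1; ring
  have haq1 : (Pstar / P0) ^ ((αq + 1) / αp) = b * a := by
    rw [ha, hb, ← Real.rpow_add hx]; congr 1; ring
  have haq2 : (Pstar / P0) ^ ((αq + 2) / αp) = b * a * a := by
    rw [ha, hb, ← Real.rpow_add hx, ← Real.rpow_add hx]; congr 1; ring
  have h2aq : (Pstar / P0) ^ (2 * αq / αp) = b * b := by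
    rw [hb, ← Real.rpow_add hx]; congr 1; ring
  rw [h2, h2aq] at hΔ
  rw [h2aq] at hD
  rw [h2, haq1] at hVesq
  rw [haq2] at hVesd
  have hDpos : 0 < D := by
    rw [hD]; positivity
  have hs2 : Real.sqrt Δ ^ 2 = Δ := Real.sq_sqrt hΔnn
  rw [h2]
  subst hVnld hVnlq hVesq hVesd
  have hDne : D ≠ 0 := ne_of_gt hDpos
  field_simp
  subst hΔ hD
  linear_combination (a*a*(Pstar^2+Q0^2*(b*b))) * hs2
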